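/- Let d ≥ 1 be an integer, q(z) = a₁ + a₂z + ⋯ a formal power series, and kⱼ = 2j(j-d) for 1 ≤ j ≤ d-1. Then there exists a formal power series solution g(z) = 1 + c₁z + ⋯ of 2(d-1)g' - 2zg'' = qg if and only if the d×d determinant with first column (a₁,…,a_d)ᵀ, and whose (i,j) entry for j ≥ 2 equals a_{i-j+1} if i ≥ j and k_{j-1}·[i = j-1] on the superdiagonal (i.e., the matrix with rows (aᵢ, a_{i-1}, …, a₁ or kⱼ in the appropriate band) as in the paper), vanishes. -/

import Mathlib

open PowerSeries Finset Matrix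

namespace OdeDet

/-- `K d n = 2 n (n - d)` as a complex number. -/
noncomputable def K (d n : ℕ) : ℂ := 2 * (n : ℂ) * ((n : ℂ) - (d : ℂ))

lemma K_ne_zero {d n : ℕ} (h0 : n ≠ 0) (hd : n ≠ d) : K d n ≠ 0 := by
  have h1 : (n : ℂ) ≠ 0 := Nat.cast_ne_zero.mpr h0
  have h2 : (n : ℂ) - (d : ℂ) ≠ 0 := sub_ne_zero.mpr (by exact_mod_cast hd)
  exact mul_ne_zero (mul_ne_zero two_ne_zero h1) h2

lemma K_d_eq_zero (d : ℕ) : K d d = 0 := by simp [K]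

/-- The row sum `S a c n = ∑_{j=0}^{n} a_{n+1-j} c_j`. -/
noncomputable def S (a : ℕ → ℂ) (c : ℕ → ℂ) (n : ℕ) : ℂ :=
  ∑ j ∈ Finset.range (n + 1), a (n + 1 - j) * c j

lemma S_congr (a : ℕ → ℂ) {c c' : ℕ → ℂ} (n : ℕ) (h : ∀ j, j ≤ n → c j = c' j) :
    S a c n = S a c' n := by
  refine Finset.sum_congr rfl fun j hj => ?_
  rw [h j (Nat.lt_succ_iff.mp (Finset.mem_range.mp hj))]

/-- The canonical solution of the recurrence. -/
noncomputable def cseq (d : ℕ) (a : ℕ → ℂ) : ℕ → ℂ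
  | 0 => 1
  | n + 1 =>
    if n + 1 = d then 0
    else -(K d (n + 1))⁻¹ * ∑ j : Fin (n + 1), a (n + 1 - (j : ℕ)) * cseq d a j
  decreasing_by exact j.isLt

lemma cseq_zero (d : ℕ) (a : ℕ → ℂ) : cseq d a 0 = 1 := by rw [cseq]

lemma cseq_succ (d : ℕ) (a : ℕ → ℂ) (n : ℕ) :
    cseq d a (n + 1) = if n + 1 = d then 0 else -(K d (n + 1))⁻¹ * S a (cseq d a) n := by
  rw [cseq, S, ← Fin.sum_univ_eq_sum_range]

lemma cseq_rec (d : ℕ) (a : ℕ → ℂ) {n : ℕ} (h : n + 1 ≠ d) :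
    K d (n + 1) * cseq d a (n + 1) + S a (cseq d a) n = 0 := by
  have hK : K d (n + 1) ≠ 0 := K_ne_zero (Nat.succ_ne_zero n) h
  rw [cseq_succ, if_neg h]
  field_simp
  ring

lemma coeff_lhs (d : ℕ) (g : PowerSeries ℂ) (n : ℕ) :
    PowerSeries.coeff n (C (2 * ((d : ℂ) - 1)) * derivative ℂ g
      - C 2 * X * derivative ℂ (derivative ℂ g))
    = -(K d (n + 1)) * PowerSeries.coeff (n + 1) g := by
  rw [map_sub, mul_assoc (C 2)]
  cases n with
  | zero =>
    simp only [coeff_zero_eq_constantCoeff, _root_.map_mul, constantCoeff_C, constantCoeff_X]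
    rw [← coeff_zero_eq_constantCoeff_apply, PowerSeries.coeff_derivative]
    simp [K]
    ring
  | succ m =>
    rw [PowerSeries.coeff_C_mul, PowerSeries.coeff_C_mul, PowerSeries.coeff_derivative,
      PowerSeries.coeff_succ_X_mul, PowerSeries.coeff_derivative, PowerSeries.coeff_derivative]
    simp only [K]
    push_cast
    ring

lemma coeff_rhs (a : ℕ → ℂ) (g : PowerSeries ℂ) (n : ℕ) :
    PowerSeries.coeff n (PowerSeries.mk (fun m => a (m + 1)) * g)
    = S a (fun m => PowerSeries.coeff m g) n := by
  rw [PowerSeries.coeff_mul, Finset.Nat.sum_antidiagonal_eq_sum_range_succ_mk]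
  simp only [coeff_mk]
  rw [S, ← Finset.sum_range_reflect]
  refine Finset.sum_congr rfl fun j hj => ?_
  have hjn : j ≤ n := Nat.lt_succ_iff.mp (Finset.mem_range.mp hj)
  have h1 : n + 1 - 1 - j = n - j := by omega
  have h2 : n - j + 1 = n + 1 - j := by omega
  have h3 : n - (n - j) = j := by omega
  rw [h1, h2, h3]

lemma ode_iff (d : ℕ) (a : ℕ → ℂ) (g : PowerSeries ℂ) :
    (C (2 * ((d : ℂ) - 1)) * derivative ℂ g
        - C 2 * X * derivative ℂ (derivative ℂ g)
      = PowerSeries.mk (fun m => a (m + 1)) * g)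
    ↔ ∀ n : ℕ, K d (n + 1) * PowerSeries.coeff (n + 1) g
        + S a (fun m => PowerSeries.coeff m g) n = 0 := by
  rw [PowerSeries.ext_iff]
  constructor
  · intro h n
    have := h n
    rw [coeff_lhs, coeff_rhs] at this
    linear_combination -this
  · intro h n
    rw [coeff_lhs, coeff_rhs]
    linear_combination -(h n)

/-- The matrix from the statement. -/
def M (d : ℕ) (a : ℕ → ℂ) : Matrix (Fin d) (Fin d) ℂ :=
  Matrix.of fun i j : Fin d =>
    if (j : ℕ) ≤ (i : ℕ) then a ((i : ℕ) - (j : ℕ) + 1)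
    else if (j : ℕ) = (i : ℕ) + 1 then
      2 * ((i : ℕ) + 1 : ℂ) * (((i : ℕ) + 1 : ℂ) - (d : ℂ))
    else 0

/-- Extension of a vector on `Fin d` by zero. -/
noncomputable def extd (d : ℕ) (v : Fin d → ℂ) : ℕ → ℂ :=
  fun n => if h : n < d then v ⟨n, h⟩ else 0

lemma extd_apply (d : ℕ) (v : Fin d → ℂ) (i : Fin d) : extd d v (i : ℕ) = v i := by
  simp [extd, i.isLt]

lemma rowsum (d : ℕ) (a : ℕ → ℂ) (v : Fin d → ℂ) (i : Fin d) :
    (M d a *ᵥ v) i = K d ((i : ℕ) + 1) * extd d v ((i : ℕ) + 1) + S a (extd d v) (i : ℕ) := by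
  classical
  set F : ℕ → ℂ := fun n =>
    (if n ≤ (i : ℕ) then a ((i : ℕ) - n + 1)
     else if n = (i : ℕ) + 1 then 2 * ((i : ℕ) + 1 : ℂ) * (((i : ℕ) + 1 : ℂ) - (d : ℂ))
     else 0) * extd d v n with hF
  have e1 : (M d a *ᵥ v) i = ∑ n ∈ Finset.range d, F n := by
    rw [Matrix.mulVec, dotProduct, ← Fin.sum_univ_eq_sum_range]
    refine Finset.sum_congr rfl fun j _ => ?_
    rw [hF]
    simp only [M, Matrix.of_apply, extd_apply]
  set N := max d ((i : ℕ) + 2) with hN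
  have e2 : ∑ n ∈ Finset.range d, F n = ∑ n ∈ Finset.range N, F n := by
    refine Finset.sum_subset (Finset.range_subset_range.mpr (le_max_left _ _)) fun n _ hn => ?_
    have hnd : ¬ n < d := fun h => hn (Finset.mem_range.mpr h)
    have : extd d v n = 0 := by simp [extd, hnd]
    rw [hF]; simp [this]
  have e3 : ∑ n ∈ Finset.range N, F n = ∑ n ∈ Finset.range ((i : ℕ) + 2), F n := by
    refine (Finset.sum_subset (Finset.range_subset_range.mpr (le_max_right _ _)) fun n _ hn => ?_).symm
    have h1 : ¬ n ≤ (i : ℕ) := by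
      have := Finset.mem_range.not.mp hn; omega
    have h2 : ¬ (n = (i : ℕ) + 1) := by
      have := Finset.mem_range.not.mp hn; omega
    rw [hF]; simp [h1, h2]
  rw [e1, e2, e3, Finset.sum_range_succ]
  have hFtop : F ((i : ℕ) + 1) = K d ((i : ℕ) + 1) * extd d v ((i : ℕ) + 1) := by
    have h1 : ¬ ((i : ℕ) + 1 ≤ (i : ℕ)) := by omega
    simp only [hF, h1, if_false, eq_self_iff_true, if_true]
    rw [K]
    push_cast
    ring
  have hSum : ∑ n ∈ Finset.range ((i : ℕ) + 1), F n = S a (extd d v) (i : ℕ) := by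
    rw [S]
    refine Finset.sum_congr rfl fun n hn => ?_
    have hni : n ≤ (i : ℕ) := Nat.lt_succ_iff.mp (Finset.mem_range.mp hn)
    rw [hF]
    simp only [if_pos hni]
    congr 2
    omega
  rw [hFtop, hSum]
  ring

lemma v0_ne_zero {d : ℕ} (hd : 1 ≤ d) (a : ℕ → ℂ) {v : Fin d → ℂ} (hv : v ≠ 0)
    (hMv : M d a *ᵥ v = 0) : v ⟨0, hd⟩ ≠ 0 := by
  intro h0
  apply hv
  have key : ∀ n, ∀ h : n < d, v ⟨n, h⟩ = 0 := by
    intro n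
    induction n using Nat.strong_induction_on with
    | _ n ih =>
      intro h
      match n with
      | 0 => exact h0
      | m + 1 =>
        have hrow := congrFun hMv ⟨m, by omega⟩
        rw [rowsum] at hrow
        have hS : S a (extd d v) m = 0 := by
          rw [S]
          refine Finset.sum_eq_zero fun j hj => ?_
          have hjm : j < m + 1 := Finset.mem_range.mp hj
          have hjd : j < d := by omega
          have : extd d v j = 0 := by
            rw [extd, dif_pos hjd]
            exact ih j (by omega) hjd
          rw [this, mul_zero]
        have hK : K d (m + 1) ≠ 0 := K_ne_zero (Nat.succ_ne_zero m) (by omega)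
        have hext : extd d v (m + 1) = 0 := by
          have := hrow
          simp only [Pi.zero_apply, hS, add_zero] at this
          exact (mul_eq_zero.mp this).resolve_left hK
        rw [extd, dif_pos h] at hext
        exact hext
  funext i
  have := key (i : ℕ) i.isLt
  simpa using this

end OdeDet

open OdeDet

/-- For integer `d ≥ 1`, the ODE `2(d-1)g' - 2zg'' = qg` has a formal power series solution
`g = 1 + c₁z + ⋯` iff the `d×d` determinant condition on `a₁,…,a_d` holds, where the matrix
has first column `(a₁,…,a_d)ᵀ`, superdiagonal entries `kᵢ = 2i(i-d)`, band entries
`a_{i-j+1}`, and zeros above the superdiagonal. -/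
theorem ode_solvable_iff_det_vanishes (d : ℕ) (hd : 1 ≤ d) (a : ℕ → ℂ) :
    (∃ g : PowerSeries ℂ, PowerSeries.coeff 0 g = 1 ∧
        C (2 * ((d : ℂ) - 1)) * derivative ℂ g
            - C 2 * X * derivative ℂ (derivative ℂ g)
          = PowerSeries.mk (fun n => a (n + 1)) * g)
    ↔ Matrix.det (Matrix.of fun i j : Fin d =>
        if (j : ℕ) ≤ (i : ℕ) then a ((i : ℕ) - (j : ℕ) + 1)
        else if (j : ℕ) = (i : ℕ) + 1 then
          2 * ((i : ℕ) + 1 : ℂ) * (((i : ℕ) + 1 : ℂ) - (d : ℂ))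
        else 0) = 0 := by
  classical
  show _ ↔ (M d a).det = 0
  rw [← Matrix.exists_mulVec_eq_zero_iff]
  constructor
  · -- ODE solution gives a kernel vector
    rintro ⟨g, hg0, hode⟩
    set c : ℕ → ℂ := fun m => PowerSeries.coeff m g with hc
    have hrec : ∀ n : ℕ, K d (n + 1) * c (n + 1) + S a c n = 0 := (ode_iff d a g).mp hode
    refine ⟨fun i => c (i : ℕ), ?_, ?_⟩
    · intro h
      have := congrFun h ⟨0, hd⟩
      simp only [Pi.zero_apply] at this
      rw [hc] at this
      simp only at this
      rw [hg0] at this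
      exact one_ne_zero this
    · funext i
      rw [rowsum]
      have hS : S a (extd d (fun i : Fin d => c (i : ℕ))) (i : ℕ) = S a c (i : ℕ) := by
        refine S_congr a _ fun j hj => ?_
        have hjd : j < d := lt_of_le_of_lt hj i.isLt
        rw [extd, dif_pos hjd]
      have hKe : K d ((i : ℕ) + 1) * extd d (fun i : Fin d => c (i : ℕ)) ((i : ℕ) + 1)
          = K d ((i : ℕ) + 1) * c ((i : ℕ) + 1) := by
        by_cases h : (i : ℕ) + 1 < d
        · rw [extd, dif_pos h]
        · have hid : (i : ℕ) + 1 = d := by have := i.isLt; omega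
          rw [hid, K_d_eq_zero, zero_mul, zero_mul]
      rw [hS, hKe, Pi.zero_apply]
      exact hrec (i : ℕ)
  · -- kernel vector gives ODE solution
    rintro ⟨v, hv, hMv⟩
    have h0 : v ⟨0, hd⟩ ≠ 0 := v0_ne_zero hd a hv hMv
    set w : ℕ → ℂ := fun n => extd d v n / v ⟨0, hd⟩ with hw
    have hw0 : w 0 = 1 := by
      rw [hw]
      simp only
      rw [extd, dif_pos (show 0 < d from hd), div_self h0]
    -- rows of the kernel equation, rescaled
    have hrow : ∀ n, n < d → K d (n + 1) * w (n + 1) + S a w n = 0 := by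
      intro n hn
      have := congrFun hMv ⟨n, hn⟩
      rw [rowsum] at this
      simp only [Pi.zero_apply] at this
      have hSw : S a w n = S a (extd d v) n / v ⟨0, hd⟩ := by
        rw [S, S, Finset.sum_div]
        refine Finset.sum_congr rfl fun j _ => ?_
        rw [hw]
        ring
      have hwn : w (n + 1) = extd d v (n + 1) / v ⟨0, hd⟩ := rfl
      rw [hwn, hSw]
      field_simp
      linear_combination this
    -- the canonical sequence agrees with w below d
    have huniq : ∀ n, n < d → cseq d a n = w n := by
      intro n
      induction n using Nat.strong_induction_on with
      | _ n ih =>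
        intro hn
        match n with
        | 0 => rw [cseq_zero, hw0]
        | m + 1 =>
          have hK : K d (m + 1) ≠ 0 := K_ne_zero (Nat.succ_ne_zero m) (by omega)
          have hScw : S a (cseq d a) m = S a w m :=
            S_congr a m fun j hj => ih j (by omega) (by omega)
          have h1 := cseq_rec d a (n := m) (by omega)
          have h2 := hrow m (by omega)
          rw [hScw] at h1
          have := sub_eq_zero.mpr (h1.trans h2.symm)
          have h3 : K d (m + 1) * (cseq d a (m + 1) - w (m + 1)) = 0 := by
            linear_combination this
          have := (mul_eq_zero.mp h3).resolve_left hK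
          exact sub_eq_zero.mp this
    -- the determinant condition : S (cseq) at d-1 vanishes
    have hcond : ∀ n, n + 1 = d → S a (cseq d a) n = 0 := by
      intro n hn
      have h2 := hrow n (by omega)
      have hKd : K d (n + 1) = 0 := by rw [hn]; exact K_d_eq_zero d
      rw [hKd, zero_mul, zero_add] at h2
      have : S a (cseq d a) n = S a w n :=
        S_congr a n fun j hj => huniq j (by omega)
      rw [this, h2]
    refine ⟨PowerSeries.mk (cseq d a), ?_, ?_⟩
    · rw [coeff_mk, cseq_zero]
    · rw [ode_iff]
      intro n
      have hcs : (fun m => PowerSeries.coeff m (PowerSeries.mk (cseq d a))) = cseq d a := by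
        funext m; rw [coeff_mk]
      rw [hcs, coeff_mk]
      by_cases h : n + 1 = d
      · rw [h, K_d_eq_zero, zero_mul, zero_add]
        exact hcond n h
      · exact cseq_rec d a h
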